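/- With f = 1_{[0,1]×[0,2]×[0,1]} and g = 1_{[1,2]×[0,2]×[1,2]} in L²([0,2]³), the iterated contraction inner product ⟨(((((f ⌢₂ f) ⌢₂ f) ⌢₁ f) ⌢₁ f) ⌢₁ f) ⌢₃ f, (((((g ⌢₂ g) ⌢₂ g) ⌢₁ g) ⌢₁ g) ⌢₁ g) ⌢₃ g⟩_{L²([0,2])} equals 32; in particular it is nonzero. -/

import Mathlib

open MeasureTheory

noncomputable section

/-- Lebesgue measure restricted to the cube `[0,2]ⁿ`. -/
def cube (n : ℕ) : Measure (Fin n → ℝ) :=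
  volume.restrict {x | ∀ i, x i ∈ Set.Icc (0:ℝ) 2}

/-- The `p`-th nested contraction of `h ∈ L²([0,2]ⁿ)` and `h' ∈ L²([0,2]ᵐ)`. -/
def contrC {n m : ℕ} (p : ℕ) (hn : p ≤ n) (hm : p ≤ m)
    (f : (Fin n → ℝ) → ℝ) (g : (Fin m → ℝ) → ℝ)
    (t : Fin (n + m - 2*p) → ℝ) : ℝ :=
  ∫ s : Fin p → ℝ,
      f (fun i => if h1 : (i : ℕ) < n - p then t ⟨i, by omega⟩
          else s (Fin.rev ⟨(i : ℕ) - (n - p), by have := i.isLt; omega⟩))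
    * g (fun i => if h1 : (i : ℕ) < p then s ⟨i, h1⟩
          else t ⟨n - p + ((i : ℕ) - p), by have := i.isLt; omega⟩)
    ∂(cube p)

/-- atomic indicator -/
def J (A : Set ℝ) : ℝ → ℝ := A.indicator (fun _ => (1:ℝ))

lemma ind3_split (A B C : Set ℝ) (x y z : ℝ) :
    (A ×ˢ B ×ˢ C).indicator (fun _ => (1:ℝ)) (x, y, z)
      = J A x * J B y * J C z := by
  classical
  simp only [J, Set.indicator_apply, Set.mem_prod]
  split_ifs <;> simp_all

lemma pi_indicator {p : ℕ} (B : Fin p → Set ℝ) (s : Fin p → ℝ) :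
    (Set.univ.pi B).indicator (fun _ => (1:ℝ)) s = ∏ i, J (B i) (s i) := by
  classical
  simp only [J, Set.indicator_apply, Set.mem_univ_pi]
  by_cases h : ∀ i, s i ∈ B i
  · simp [h]
  · push_neg at h
    obtain ⟨i, hi⟩ := h
    rw [if_neg (fun hc => hi (hc i)), eq_comm]
    exact Finset.prod_eq_zero (Finset.mem_univ i) (by simp [hi])

lemma cube_pi {p : ℕ} (B : Fin p → Set ℝ) (hB : ∀ i, MeasurableSet (B i)) :
    ∫ s, (Set.univ.pi B).indicator (fun _ => (1:ℝ)) s ∂cube p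
      = ∏ i, (volume (B i ∩ Set.Icc (0:ℝ) 2)).toReal := by
  have hS : {x : Fin p → ℝ | ∀ i, x i ∈ Set.Icc (0:ℝ) 2}
      = Set.univ.pi (fun _ => Set.Icc (0:ℝ) 2) := by
    ext x; simp only [Set.mem_setOf_eq, Set.mem_univ_pi]
  rw [cube, hS, integral_indicator (MeasurableSet.univ_pi hB),
    Measure.restrict_restrict (MeasurableSet.univ_pi hB), setIntegral_const,
    ← Set.pi_inter_distrib, measureReal_def, volume_pi_pi, smul_eq_mul, mul_one, ENNReal.toReal_prod]

lemma cube1' (A : Set ℝ) (hA : MeasurableSet A) :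
    ∫ s : Fin 1 → ℝ, J A (s 0) ∂cube 1 = (volume (A ∩ Set.Icc (0:ℝ) 2)).toReal := by
  have h := cube_pi (fun _ : Fin 1 => A) (fun _ => hA)
  simp only [pi_indicator, Fin.prod_univ_one] at h
  simpa using h

lemma cube2' (A C : Set ℝ) (hA : MeasurableSet A) (hC : MeasurableSet C) :
    ∫ s : Fin 2 → ℝ, J A (s 0) * J C (s 1) ∂cube 2
      = (volume (A ∩ Set.Icc (0:ℝ) 2)).toReal * (volume (C ∩ Set.Icc (0:ℝ) 2)).toReal := by
  have h := cube_pi ![A, C] (by intro i; fin_cases i <;> assumption)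
  simp only [pi_indicator, Fin.prod_univ_two] at h
  simpa using h

lemma cube3' (A B C : Set ℝ) (hA : MeasurableSet A) (hB : MeasurableSet B)
    (hC : MeasurableSet C) :
    ∫ s : Fin 3 → ℝ, J A (s 0) * J B (s 1) * J C (s 2) ∂cube 3
      = (volume (A ∩ Set.Icc (0:ℝ) 2)).toReal * (volume (B ∩ Set.Icc (0:ℝ) 2)).toReal
        * (volume (C ∩ Set.Icc (0:ℝ) 2)).toReal := by
  have h := cube_pi ![A, B, C] (by intro i; fin_cases i <;> assumption)
  simp only [pi_indicator, Fin.prod_univ_three] at h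
  simpa using h

lemma vol_Icc (a b : ℝ) (ha : 0 ≤ a) (hb : b ≤ 2) (hab : a ≤ b) :
    (volume (Set.Icc a b ∩ Set.Icc (0:ℝ) 2)).toReal = b - a := by
  rw [Set.Icc_inter_Icc, Real.volume_Icc, max_eq_left ha, min_eq_left hb,
    ENNReal.toReal_ofReal (by linarith)]


lemma chain (a b : ℝ) (ha : 0 ≤ a) (hb : b ≤ 2) (hd : b - a = 1) (h : (Fin 3 → ℝ) → ℝ)
    (hdef : ∀ t, h t = Set.indicator
      (Set.Icc a b ×ˢ Set.Icc (0:ℝ) 2 ×ˢ Set.Icc a b)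
      (fun _ => (1:ℝ)) (t 0, t 1, t 2)) :
    contrC 3 (by norm_num) (by norm_num)
      (contrC 1 (by norm_num) (by norm_num)
        (contrC 1 (by norm_num) (by norm_num)
          (contrC 1 (by norm_num) (by norm_num)
            (contrC 2 (by norm_num) (by norm_num)
              (contrC 2 (by norm_num) (by norm_num) h h) h) h) h) h) h
      = fun t : Fin 1 → ℝ => 4 * J (Set.Icc (0:ℝ) 2) (t 0) := by
  have hab : a ≤ b := by linarith
  have h1 : contrC 2 (by norm_num) (by norm_num) h h
      = fun t : Fin 2 → ℝ => 2 * (J (Set.Icc a b) (t 0) * J (Set.Icc a b) (t 1)) := by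
    funext t
    simp only [contrC, hdef, Fin.rev]
    norm_num [-Set.Icc_prod_Icc, ind3_split]
    have rear : ∀ s : Fin 2 → ℝ,
        J (Set.Icc a b) (t 0) * J (Set.Icc 0 2) (s 1) * J (Set.Icc a b) (s 0) *
          (J (Set.Icc a b) (s 0) * J (Set.Icc 0 2) (s 1) * J (Set.Icc a b) (t 1))
        = (J (Set.Icc a b) (t 0) * J (Set.Icc a b) (t 1)) *
            (J (Set.Icc a b) (s 0) * J (Set.Icc 0 2) (s 1)) := by
      intro s
      classical
      simp only [J, Set.indicator_apply]
      split_ifs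
      any_goals ring
      all_goals (simp only [Set.mem_inter_iff] at *; tauto)
    rw [integral_congr_ae (Filter.Eventually.of_forall rear)]
    rw [integral_const_mul, cube2' _ _ measurableSet_Icc measurableSet_Icc,
      vol_Icc a b ha hb hab, Set.inter_self, Real.volume_Icc, hd]
    norm_num
    ring
  rw [h1]
  have h2 : contrC 2 (by norm_num) (by norm_num)
      (fun t : Fin 2 → ℝ => 2 * (J (Set.Icc a b) (t 0) * J (Set.Icc a b) (t 1))) h
      = fun t : Fin 1 → ℝ => 2 * J (Set.Icc a b) (t 0) := by
    funext t
    simp only [contrC, hdef, Fin.rev]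
    norm_num [-Set.Icc_prod_Icc, ind3_split]
    have rear : ∀ s : Fin 2 → ℝ,
        2 * (J (Set.Icc a b) (s 1) * J (Set.Icc a b) (s 0)) *
          (J (Set.Icc a b) (s 0) * J (Set.Icc 0 2) (s 1) * J (Set.Icc a b) (t 0))
        = (2 * J (Set.Icc a b) (t 0)) *
            (J (Set.Icc a b) (s 0) * J (Set.Icc a b ∩ Set.Icc 0 2) (s 1)) := by
      intro s
      classical
      simp only [J, Set.indicator_apply]
      split_ifs
      any_goals ring
      all_goals (simp only [Set.mem_inter_iff] at *; tauto)
    rw [integral_congr_ae (Filter.Eventually.of_forall rear)]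
    rw [integral_const_mul, cube2' _ _ measurableSet_Icc (measurableSet_Icc.inter measurableSet_Icc),
      Set.inter_assoc, Set.inter_self, vol_Icc a b ha hb hab, hd]
    norm_num
  rw [h2]
  have h3 : contrC 1 (by norm_num) (by norm_num)
      (fun t : Fin 1 → ℝ => 2 * J (Set.Icc a b) (t 0)) h
      = fun t : Fin 2 → ℝ => 2 * (J (Set.Icc (0:ℝ) 2) (t 0) * J (Set.Icc a b) (t 1)) := by
    funext t
    simp only [contrC, hdef, Fin.rev]
    norm_num [-Set.Icc_prod_Icc, ind3_split]
    have rear : ∀ s : Fin 1 → ℝ,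
        2 * J (Set.Icc a b) (s 0) *
          (J (Set.Icc a b) (s 0) * J (Set.Icc 0 2) (t 0) * J (Set.Icc a b) (t 1))
        = (2 * (J (Set.Icc (0:ℝ) 2) (t 0) * J (Set.Icc a b) (t 1))) * J (Set.Icc a b) (s 0) := by
      intro s
      classical
      simp only [J, Set.indicator_apply]
      split_ifs
      any_goals ring
      all_goals (simp only [Set.mem_inter_iff] at *; tauto)
    rw [integral_congr_ae (Filter.Eventually.of_forall rear)]
    rw [integral_const_mul, cube1' _ measurableSet_Icc, vol_Icc a b ha hb hab, hd]
    ring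
  rw [h3]
  have h4 : contrC 1 (by norm_num) (by norm_num)
      (fun t : Fin 2 → ℝ => 2 * (J (Set.Icc (0:ℝ) 2) (t 0) * J (Set.Icc a b) (t 1))) h
      = fun t : Fin 3 → ℝ => 2 * (J (Set.Icc (0:ℝ) 2) (t 0) * J (Set.Icc (0:ℝ) 2) (t 1)
          * J (Set.Icc a b) (t 2)) := by
    funext t
    simp only [contrC, hdef, Fin.rev]
    norm_num [-Set.Icc_prod_Icc, ind3_split]
    rw [show (⟨2, by norm_num⟩ : Fin (2+3-2*1)) = 2 from rfl]
    have rear : ∀ s : Fin 1 → ℝ,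
        2 * (J (Set.Icc 0 2) (t 0) * J (Set.Icc a b) (s 0)) *
          (J (Set.Icc a b) (s 0) * J (Set.Icc 0 2) (t 1) * J (Set.Icc a b) (t 2))
        = (2 * (J (Set.Icc (0:ℝ) 2) (t 0) * J (Set.Icc (0:ℝ) 2) (t 1)
            * J (Set.Icc a b) (t 2))) * J (Set.Icc a b) (s 0) := by
      intro s
      classical
      simp only [J, Set.indicator_apply]
      split_ifs
      any_goals ring
      all_goals (simp only [Set.mem_inter_iff] at *; tauto)
    rw [integral_congr_ae (Filter.Eventually.of_forall rear)]
    rw [integral_const_mul, cube1' _ measurableSet_Icc, vol_Icc a b ha hb hab, hd]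
    ring
  rw [h4]
  have h5 : contrC 1 (by norm_num) (by norm_num)
      (fun t : Fin 3 → ℝ => 2 * (J (Set.Icc (0:ℝ) 2) (t 0) * J (Set.Icc (0:ℝ) 2) (t 1)
          * J (Set.Icc a b) (t 2))) h
      = fun t : Fin 4 → ℝ => 2 * (J (Set.Icc (0:ℝ) 2) (t 0) * J (Set.Icc (0:ℝ) 2) (t 1)
          * J (Set.Icc (0:ℝ) 2) (t 2) * J (Set.Icc a b) (t 3)) := by
    funext t
    simp only [contrC, hdef, Fin.rev]
    norm_num [-Set.Icc_prod_Icc, ind3_split]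
    rw [show (⟨2, by norm_num⟩ : Fin (3+3-2*1)) = 2 from rfl, show (⟨3, by norm_num⟩ : Fin (3+3-2*1)) = 3 from rfl]
    have rear : ∀ s : Fin 1 → ℝ,
        2 * (J (Set.Icc 0 2) (t 0) * J (Set.Icc 0 2) (t 1) * J (Set.Icc a b) (s 0)) *
          (J (Set.Icc a b) (s 0) * J (Set.Icc 0 2) (t 2) * J (Set.Icc a b) (t 3))
        = (2 * (J (Set.Icc (0:ℝ) 2) (t 0) * J (Set.Icc (0:ℝ) 2) (t 1)
            * J (Set.Icc (0:ℝ) 2) (t 2) * J (Set.Icc a b) (t 3))) * J (Set.Icc a b) (s 0) := by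
      intro s
      classical
      simp only [J, Set.indicator_apply]
      split_ifs
      any_goals ring
      all_goals (simp only [Set.mem_inter_iff] at *; tauto)
    rw [integral_congr_ae (Filter.Eventually.of_forall rear)]
    rw [integral_const_mul, cube1' _ measurableSet_Icc, vol_Icc a b ha hb hab, hd]
    ring
  rw [h5]
  have h6 : contrC 3 (by norm_num) (by norm_num)
      (fun t : Fin 4 → ℝ => 2 * (J (Set.Icc (0:ℝ) 2) (t 0) * J (Set.Icc (0:ℝ) 2) (t 1)
          * J (Set.Icc (0:ℝ) 2) (t 2) * J (Set.Icc a b) (t 3))) h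
      = fun t : Fin 1 → ℝ => 4 * J (Set.Icc (0:ℝ) 2) (t 0) := by
    funext t
    simp only [contrC, hdef, Fin.rev]
    norm_num [-Set.Icc_prod_Icc, ind3_split, show ((3 : Fin 4) : ℕ) = 3 from rfl]
    rw [show (⟨2, by norm_num⟩ : Fin 3) = 2 from rfl]
    have rear : ∀ s : Fin 3 → ℝ,
        2 * (J (Set.Icc 0 2) (t 0) * J (Set.Icc 0 2) (s 2) * J (Set.Icc 0 2) (s 1)
            * J (Set.Icc a b) (s 0)) *
          (J (Set.Icc a b) (s 0) * J (Set.Icc 0 2) (s 1) * J (Set.Icc a b) (s 2))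
        = (2 * J (Set.Icc (0:ℝ) 2) (t 0)) *
            (J (Set.Icc a b) (s 0) * J (Set.Icc (0:ℝ) 2) (s 1)
              * J (Set.Icc a b ∩ Set.Icc (0:ℝ) 2) (s 2)) := by
      intro s
      classical
      simp only [J, Set.indicator_apply]
      split_ifs
      any_goals ring
      all_goals (simp only [Set.mem_inter_iff] at *; tauto)
    rw [integral_congr_ae (Filter.Eventually.of_forall rear)]
    rw [integral_const_mul, cube3' _ _ _ measurableSet_Icc measurableSet_Icc
        (measurableSet_Icc.inter measurableSet_Icc),
      Set.inter_assoc, Set.inter_self, vol_Icc a b ha hb hab,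
      Real.volume_Icc, hd]
    norm_num
    ring
  rw [h6]

theorem stmt12 (f g : (Fin 3 → ℝ) → ℝ)
    (hfdef : ∀ t, f t = Set.indicator
      (Set.Icc (0:ℝ) 1 ×ˢ Set.Icc (0:ℝ) 2 ×ˢ Set.Icc (0:ℝ) 1)
      (fun _ => (1:ℝ)) (t 0, t 1, t 2))
    (hgdef : ∀ t, g t = Set.indicator
      (Set.Icc (1:ℝ) 2 ×ˢ Set.Icc (0:ℝ) 2 ×ˢ Set.Icc (1:ℝ) 2)
      (fun _ => (1:ℝ)) (t 0, t 1, t 2)) :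
    (∫ x, contrC 3 (by norm_num) (by norm_num)
          (contrC 1 (by norm_num) (by norm_num)
            (contrC 1 (by norm_num) (by norm_num)
              (contrC 1 (by norm_num) (by norm_num)
                (contrC 2 (by norm_num) (by norm_num)
                  (contrC 2 (by norm_num) (by norm_num) f f) f) f) f) f) f x
        * contrC 3 (by norm_num) (by norm_num)
          (contrC 1 (by norm_num) (by norm_num)
            (contrC 1 (by norm_num) (by norm_num)
              (contrC 1 (by norm_num) (by norm_num)
                (contrC 2 (by norm_num) (by norm_num)
                  (contrC 2 (by norm_num) (by norm_num) g g) g) g) g) g) g x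
        ∂(cube _)) = 32 := by
  rw [chain 0 1 (by norm_num) (by norm_num) (by norm_num) f hfdef,
    chain 1 2 (by norm_num) (by norm_num) (by norm_num) g hgdef]
  have rear : ∀ x : Fin 1 → ℝ,
      (fun t : Fin 1 → ℝ => 4 * J (Set.Icc (0:ℝ) 2) (t 0)) x
        * (fun t : Fin 1 → ℝ => 4 * J (Set.Icc (0:ℝ) 2) (t 0)) x
      = 16 * J (Set.Icc (0:ℝ) 2) (x 0) := by
    intro x
    simp only [J, Set.indicator_apply]
    split_ifs <;> ring
  have key : ∫ x : Fin 1 → ℝ,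
      (fun t : Fin 1 → ℝ => 4 * J (Set.Icc (0:ℝ) 2) (t 0)) x
        * (fun t : Fin 1 → ℝ => 4 * J (Set.Icc (0:ℝ) 2) (t 0)) x ∂cube 1 = 32 := by
    rw [integral_congr_ae (Filter.Eventually.of_forall rear), integral_const_mul,
      cube1' _ measurableSet_Icc, Set.inter_self, Real.volume_Icc]
    norm_num
  exact key

end
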